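/- The function F(t,r) = (t−r)^ρ · |log(t−r)|^η, for ρ > 0 and η ∈ ℝ, restricted to a neighborhood of the diagonal where t−r ∈ (0,1), is a function of smooth variation of index ρ at the diagonal, i.e., it satisfies conditions (a)–(d) of the definition of SR²_ρ(0+) uniformly on compacts. -/

import Mathlib

open MeasureTheory Filter Set intervalIntegral Real

/-- `p01 F t r = ∂F/∂r (t,r)` -/
noncomputable def p01 (F : ℝ → ℝ → ℝ) (t r : ℝ) : ℝ := deriv (fun x => F t x) r
/-- `p10 F t r = ∂F/∂t (t,r)` -/
noncomputable def p10 (F : ℝ → ℝ → ℝ) (t r : ℝ) : ℝ := deriv (fun x => F x r) t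
/-- `p11 F t r = ∂²F/∂t∂r (t,r)` -/
noncomputable def p11 (F : ℝ → ℝ → ℝ) (t r : ℝ) : ℝ := deriv (fun x => p01 F x r) t
/-- `p02 F t r = ∂²F/∂r² (t,r)` -/
noncomputable def p02 (F : ℝ → ℝ → ℝ) (t r : ℝ) : ℝ := deriv (fun x => p01 F t x) r

/-- `lim_{h↓0} sup_{t∈K} |G h t + c| = 0` for every compact `K ⊂ ℝ`. -/
def UnifDiagLimit (G : ℝ → ℝ → ℝ) (c : ℝ) : Prop :=
  ∀ K : Set ℝ, IsCompact K → ∀ ε > 0, ∃ h₀ > 0, ∀ h : ℝ, 0 < h → h < h₀ →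
    ∀ t ∈ K, |G h t + c| < ε

/-- `F ∈ SR²_ρ(0+)` : a function of smooth variation of index `ρ` at the diagonal. -/
def SmoothVar (F : ℝ → ℝ → ℝ) (ρ : ℝ) : Prop :=
  ContinuousOn (fun p : ℝ × ℝ => F p.1 p.2) {p : ℝ × ℝ | p.2 ≤ p.1} ∧
  ContDiffOn ℝ 2 (fun p : ℝ × ℝ => F p.1 p.2) {p : ℝ × ℝ | p.2 < p.1} ∧
  (∀ t r : ℝ, r < t → 0 < F t r) ∧
  UnifDiagLimit (fun h t => h * p01 F t (t - h) / F t (t - h)) ρ ∧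
  UnifDiagLimit (fun h t => h * p10 F (t + h) t / F (t + h) t) (-ρ) ∧
  UnifDiagLimit (fun h t => h ^ 2 * p11 F t (t - h) / F t (t - h)) (ρ * (ρ - 1)) ∧
  UnifDiagLimit (fun h t => h ^ 2 * p02 F t (t - h) / F t (t - h)) (-(ρ * (ρ - 1)))

namespace PLK
open Topology

noncomputable def G (ρ η x : ℝ) : ℝ := x ^ ρ * |Real.log x| ^ η
noncomputable def g0 (ρ η x : ℝ) : ℝ := x ^ ρ * (-Real.log x) ^ η
noncomputable def g1 (ρ η x : ℝ) : ℝ :=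
  x ^ (ρ - 1) * (-Real.log x) ^ (η - 1) * (ρ * (-Real.log x) - η)
noncomputable def g2 (ρ η x : ℝ) : ℝ :=
  x ^ (ρ - 2) * (-Real.log x) ^ (η - 2) *
    ((ρ - 1) * (-Real.log x) * (ρ * (-Real.log x) - η)
      - (η - 1) * (ρ * (-Real.log x) - η) - ρ * (-Real.log x))

lemma logneg_pos {x : ℝ} (hx : x ∈ Set.Ioo (0:ℝ) 1) : 0 < -Real.log x :=
  neg_pos.mpr (Real.log_neg hx.1 hx.2)

lemma G_eq_g0 (ρ η : ℝ) {x : ℝ} (hx : x ∈ Set.Ioo (0:ℝ) 1) : G ρ η x = g0 ρ η x := by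
  unfold G g0
  rw [abs_of_neg (Real.log_neg hx.1 hx.2)]

lemma hasDerivAt_g0 (ρ η : ℝ) {x : ℝ} (hx : x ∈ Set.Ioo (0:ℝ) 1) :
    HasDerivAt (g0 ρ η) (g1 ρ η x) x := by
  have hx0 : (0:ℝ) < x := hx.1
  have hL : 0 < -Real.log x := logneg_pos hx
  have h1 : HasDerivAt (fun y : ℝ => y ^ ρ) (ρ * x ^ (ρ - 1)) x :=
    Real.hasDerivAt_rpow_const (Or.inl hx0.ne')
  have hlog : HasDerivAt (fun y : ℝ => -Real.log y) (-x⁻¹) x :=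
    (Real.hasDerivAt_log hx0.ne').neg
  have hpow : HasDerivAt (fun u : ℝ => u ^ η) (η * (-Real.log x) ^ (η - 1)) (-Real.log x) :=
    Real.hasDerivAt_rpow_const (Or.inl hL.ne')
  have h2 : HasDerivAt (fun y : ℝ => (-Real.log y) ^ η)
      (η * (-Real.log x) ^ (η - 1) * -x⁻¹) x := hpow.comp (h := fun y : ℝ => -Real.log y) x hlog
  have h := h1.mul h2
  refine h.congr_deriv (Eq.symm ?_)
  unfold g1
  have e1 : x ^ ρ = x ^ (ρ - 1) * x := by
    rw [← Real.rpow_add_one hx0.ne' (ρ-1), show ρ - 1 + 1 = ρ by ring]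
  have e2 : (-Real.log x) ^ η = (-Real.log x) ^ (η - 1) * (-Real.log x) := by
    rw [← Real.rpow_add_one hL.ne' (η-1), show η - 1 + 1 = η by ring]
  rw [e1, e2]
  set L := -Real.log x with hLdef
  set X := x ^ (ρ-1) with hXdef
  set M := L ^ (η-1) with hMdef
  have hxne : x ≠ 0 := hx0.ne'
  field_simp
  ring

lemma hasDerivAt_g1 (ρ η : ℝ) {x : ℝ} (hx : x ∈ Set.Ioo (0:ℝ) 1) :
    HasDerivAt (g1 ρ η) (g2 ρ η x) x := by
  have hx0 : (0:ℝ) < x := hx.1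
  have hL : 0 < -Real.log x := logneg_pos hx
  have h1 : HasDerivAt (fun y : ℝ => y ^ (ρ-1)) ((ρ-1) * x ^ (ρ-1-1)) x :=
    Real.hasDerivAt_rpow_const (Or.inl hx0.ne')
  rw [show ρ-1-1 = ρ-2 by ring] at h1
  have hlog : HasDerivAt (fun y : ℝ => -Real.log y) (-x⁻¹) x :=
    (Real.hasDerivAt_log hx0.ne').neg
  have hpow : HasDerivAt (fun u : ℝ => u ^ (η-1)) ((η-1) * (-Real.log x) ^ (η-1-1)) (-Real.log x) :=
    Real.hasDerivAt_rpow_const (Or.inl hL.ne')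
  rw [show η-1-1 = η-2 by ring] at hpow
  have h2 : HasDerivAt (fun y : ℝ => (-Real.log y) ^ (η-1))
      ((η-1) * (-Real.log x) ^ (η - 2) * -x⁻¹) x := hpow.comp (h := fun y : ℝ => -Real.log y) x hlog
  have h3 : HasDerivAt (fun y : ℝ => ρ * (-Real.log y) - η) (ρ * -x⁻¹) x :=
    (hlog.const_mul ρ).sub_const η
  have h := (h1.mul h2).mul h3
  simp only [Pi.mul_apply] at h
  refine h.congr_deriv (Eq.symm ?_)
  unfold g2
  have e1 : x ^ (ρ-1) = x ^ (ρ - 2) * x := by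
    rw [← Real.rpow_add_one hx0.ne' (ρ-2), show ρ - 2 + 1 = ρ - 1 by ring]
  have e2 : (-Real.log x) ^ (η-1) = (-Real.log x) ^ (η - 2) * (-Real.log x) := by
    rw [← Real.rpow_add_one hL.ne' (η-2), show η - 2 + 1 = η - 1 by ring]
  rw [e1, e2]
  set L := -Real.log x with hLdef
  set X := x ^ (ρ-2) with hXdef
  set M := L ^ (η-2) with hMdef
  have hxne : x ≠ 0 := hx0.ne'
  field_simp
  ring

lemma hasDerivAt_G (ρ η : ℝ) {x : ℝ} (hx : x ∈ Set.Ioo (0:ℝ) 1) :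
    HasDerivAt (G ρ η) (g1 ρ η x) x := by
  have hev : G ρ η =ᶠ[𝓝 x] g0 ρ η :=
    Filter.eventuallyEq_of_mem (isOpen_Ioo.mem_nhds hx) (fun y hy => G_eq_g0 ρ η hy)
  exact (hasDerivAt_g0 ρ η hx).congr_of_eventuallyEq hev

section Fderivs
variable (ρ η : ℝ) (F : ℝ → ℝ → ℝ)
  (hF : ∀ t r : ℝ, F t r = (t - r) ^ ρ * |Real.log (t - r)| ^ η)

include hF

lemma F_eq {t r : ℝ} : F t r = G ρ η (t - r) := by rw [hF]; rfl

lemma p01_eq {t r : ℝ} (h : t - r ∈ Set.Ioo (0:ℝ) 1) : p01 F t r = -g1 ρ η (t - r) := by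
  have hfun : (fun x => F t x) = fun x => G ρ η (t - x) := by
    funext x; rw [hF]; rfl
  have hinner : HasDerivAt (fun x : ℝ => t - x) (-1) r := by
    simpa using (hasDerivAt_id r).const_sub t
  have hd : HasDerivAt (fun x => G ρ η (t - x)) (g1 ρ η (t - r) * (-1)) r :=
    (hasDerivAt_G ρ η h).comp r hinner
  rw [p01, hfun, hd.deriv]; ring

lemma p10_eq {t r : ℝ} (h : t - r ∈ Set.Ioo (0:ℝ) 1) : p10 F t r = g1 ρ η (t - r) := by
  have hfun : (fun x => F x r) = fun x => G ρ η (x - r) := by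
    funext x; rw [hF]; rfl
  have hinner : HasDerivAt (fun x : ℝ => x - r) 1 t := (hasDerivAt_id t).sub_const r
  have hd : HasDerivAt (fun x => G ρ η (x - r)) (g1 ρ η (t - r) * 1) t :=
    (hasDerivAt_G ρ η h).comp (h := fun x : ℝ => x - r) t hinner
  rw [p10, hfun, hd.deriv]; ring

lemma p11_eq {t r : ℝ} (h : t - r ∈ Set.Ioo (0:ℝ) 1) : p11 F t r = -g2 ρ η (t - r) := by
  have hopen : IsOpen {x : ℝ | x - r ∈ Set.Ioo (0:ℝ) 1} :=
    isOpen_Ioo.preimage (continuous_id.sub continuous_const)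
  have hev : (fun x => p01 F x r) =ᶠ[𝓝 t] (fun x => -g1 ρ η (x - r)) := by
    filter_upwards [hopen.mem_nhds h] with x hx using p01_eq ρ η F hF hx
  rw [p11, hev.deriv_eq]
  have hinner : HasDerivAt (fun x : ℝ => x - r) 1 t := (hasDerivAt_id t).sub_const r
  have hd : HasDerivAt (fun x => -g1 ρ η (x - r)) (-(g2 ρ η (t - r) * 1)) t :=
    ((hasDerivAt_g1 ρ η h).comp (h := fun x : ℝ => x - r) t hinner).neg
  rw [hd.deriv]; ring

lemma p02_eq {t r : ℝ} (h : t - r ∈ Set.Ioo (0:ℝ) 1) : p02 F t r = g2 ρ η (t - r) := by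
  have hopen : IsOpen {x : ℝ | t - x ∈ Set.Ioo (0:ℝ) 1} :=
    isOpen_Ioo.preimage (continuous_const.sub continuous_id)
  have hev : (fun x => p01 F t x) =ᶠ[𝓝 r] (fun x => -g1 ρ η (t - x)) := by
    filter_upwards [hopen.mem_nhds h] with x hx using p01_eq ρ η F hF hx
  rw [p02, hev.deriv_eq]
  have hinner : HasDerivAt (fun x : ℝ => t - x) (-1) r := by
    simpa using (hasDerivAt_id r).const_sub t
  have hd : HasDerivAt (fun x => -g1 ρ η (t - x)) (-(g2 ρ η (t - r) * (-1))) r :=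
    ((hasDerivAt_g1 ρ η h).comp r hinner).neg
  rw [hd.deriv]; ring

end Fderivs

lemma g0_pos (ρ η : ℝ) {x : ℝ} (hx : x ∈ Set.Ioo (0:ℝ) 1) : 0 < g0 ρ η x :=
  mul_pos (Real.rpow_pos_of_pos hx.1 _) (Real.rpow_pos_of_pos (logneg_pos hx) _)

lemma ratio1 (ρ η : ℝ) {x : ℝ} (hx : x ∈ Set.Ioo (0:ℝ) 1) :
    x * g1 ρ η x / g0 ρ η x = ρ - η / (-Real.log x) := by
  have hx0 : (0:ℝ) < x := hx.1
  have hL : 0 < -Real.log x := logneg_pos hx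
  have hX : (0:ℝ) < x ^ (ρ-1) := Real.rpow_pos_of_pos hx0 _
  have hM : (0:ℝ) < (-Real.log x) ^ (η-1) := Real.rpow_pos_of_pos hL _
  unfold g1 g0
  have e1 : x ^ ρ = x ^ (ρ - 1) * x := by
    rw [← Real.rpow_add_one hx0.ne' (ρ-1), show ρ - 1 + 1 = ρ by ring]
  have e2 : (-Real.log x) ^ η = (-Real.log x) ^ (η - 1) * (-Real.log x) := by
    rw [← Real.rpow_add_one hL.ne' (η-1), show η - 1 + 1 = η by ring]
  rw [e1, e2]
  set L := -Real.log x with hLdef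
  set X := x ^ (ρ-1) with hXdef
  set M := L ^ (η-1) with hMdef
  have hxne : x ≠ 0 := hx0.ne'
  have hXne : X ≠ 0 := hX.ne'
  have hMne : M ≠ 0 := hM.ne'
  have hLne : L ≠ 0 := hL.ne'
  field_simp

lemma ratio2 (ρ η : ℝ) {x : ℝ} (hx : x ∈ Set.Ioo (0:ℝ) 1) :
    x ^ 2 * g2 ρ η x / g0 ρ η x
      = ρ * (ρ - 1) - ((ρ-1)*η + (η-1)*ρ + ρ) / (-Real.log x)
        + (η-1)*η / (-Real.log x) ^ 2 := by
  have hx0 : (0:ℝ) < x := hx.1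
  have hL : 0 < -Real.log x := logneg_pos hx
  have hX : (0:ℝ) < x ^ (ρ-2) := Real.rpow_pos_of_pos hx0 _
  have hM : (0:ℝ) < (-Real.log x) ^ (η-2) := Real.rpow_pos_of_pos hL _
  unfold g2 g0
  have e1 : x ^ ρ = x ^ (ρ - 2) * x * x := by
    rw [← Real.rpow_add_one hx0.ne' (ρ-2), ← Real.rpow_add_one hx0.ne' (ρ-2+1),
      show ρ - 2 + 1 + 1 = ρ by ring]
  have e2 : (-Real.log x) ^ η = (-Real.log x) ^ (η - 2) * (-Real.log x) * (-Real.log x) := by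
    rw [← Real.rpow_add_one hL.ne' (η-2), ← Real.rpow_add_one hL.ne' (η-2+1),
      show η - 2 + 1 + 1 = η by ring]
  rw [e1, e2]
  set L := -Real.log x with hLdef
  set X := x ^ (ρ-2) with hXdef
  set M := L ^ (η-2) with hMdef
  have hxne : x ≠ 0 := hx0.ne'
  have hXne : X ≠ 0 := hX.ne'
  have hMne : M ≠ 0 := hM.ne'
  have hLne : L ≠ 0 := hL.ne'
  field_simp
  ring

lemma tendsto_invL : Filter.Tendsto (fun x : ℝ => (-Real.log x)⁻¹) (𝓝[>] (0:ℝ)) (𝓝 0) := by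
  have h1 : Filter.Tendsto Real.log (𝓝[>] (0:ℝ)) Filter.atBot :=
    Real.tendsto_log_nhdsGT_zero
  have h2 : Filter.Tendsto (fun x : ℝ => -Real.log x) (𝓝[>] (0:ℝ)) Filter.atTop :=
    tendsto_neg_atBot_atTop.comp h1
  exact h2.inv_tendsto_atTop

lemma tendsto_phi (ρ η : ℝ) :
    Filter.Tendsto (fun x : ℝ => ρ - η / (-Real.log x)) (𝓝[>] (0:ℝ)) (𝓝 ρ) := by
  have h2 : Filter.Tendsto (fun x : ℝ => η / (-Real.log x)) (𝓝[>] (0:ℝ)) (𝓝 0) := by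
    simpa [div_eq_mul_inv] using tendsto_invL.const_mul η
  simpa using (tendsto_const_nhds (x := ρ) (f := 𝓝[>] (0:ℝ))).sub h2

lemma tendsto_psi (ρ η : ℝ) :
    Filter.Tendsto (fun x : ℝ => ρ * (ρ - 1) - ((ρ-1)*η + (η-1)*ρ + ρ) / (-Real.log x)
        + (η-1)*η / (-Real.log x) ^ 2) (𝓝[>] (0:ℝ)) (𝓝 (ρ * (ρ - 1))) := by
  have h2 : Filter.Tendsto (fun x : ℝ => ((ρ-1)*η + (η-1)*ρ + ρ) / (-Real.log x))
      (𝓝[>] (0:ℝ)) (𝓝 0) := by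
    simpa [div_eq_mul_inv] using tendsto_invL.const_mul ((ρ-1)*η + (η-1)*ρ + ρ)
  have h3 : Filter.Tendsto (fun x : ℝ => (η-1)*η / (-Real.log x) ^ 2) (𝓝[>] (0:ℝ)) (𝓝 0) := by
    have h4 := (tendsto_invL.mul tendsto_invL).const_mul ((η-1)*η)
    rw [mul_zero, mul_zero] at h4
    exact h4.congr fun x => by ring
  have := ((tendsto_const_nhds (x := ρ * (ρ - 1)) (f := 𝓝[>] (0:ℝ))).sub h2).add h3
  simpa using this

lemma phi_eps (ρ η ε : ℝ) (hε : 0 < ε) :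
    ∃ δ > 0, ∀ h : ℝ, 0 < h → h < δ → |(ρ - η / (-Real.log h)) - ρ| < ε := by
  obtain ⟨δ, hδ, hd⟩ := Metric.tendsto_nhdsWithin_nhds.mp (tendsto_phi ρ η) ε hε
  exact ⟨δ, hδ, fun h h0 hlt => by
    have := hd (Set.mem_Ioi.mpr h0) (by rwa [Real.dist_eq, sub_zero, abs_of_pos h0])
    rwa [Real.dist_eq] at this⟩

lemma psi_eps (ρ η ε : ℝ) (hε : 0 < ε) :
    ∃ δ > 0, ∀ h : ℝ, 0 < h → h < δ →
      |(ρ * (ρ - 1) - ((ρ-1)*η + (η-1)*ρ + ρ) / (-Real.log h)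
        + (η-1)*η / (-Real.log h) ^ 2) - ρ * (ρ - 1)| < ε := by
  obtain ⟨δ, hδ, hd⟩ := Metric.tendsto_nhdsWithin_nhds.mp (tendsto_psi ρ η) ε hε
  exact ⟨δ, hδ, fun h h0 hlt => by
    have := hd (Set.mem_Ioi.mpr h0) (by rwa [Real.dist_eq, sub_zero, abs_of_pos h0])
    rwa [Real.dist_eq] at this⟩

end PLK

/-- `F(t,r) = (t-r)^ρ |log(t-r)|^η` satisfies conditions (a)–(d) of
the definition of `SR²_ρ(0+)` uniformly on compacts (near the diagonal, where
`t - r ∈ (0,1)`). -/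
theorem power_log_kernel_smoothVar (ρ η : ℝ) (hρ : 0 < ρ)
    (F : ℝ → ℝ → ℝ) (hF : ∀ t r : ℝ, F t r = (t - r) ^ ρ * |Real.log (t - r)| ^ η) :
    UnifDiagLimit (fun h t => h * p01 F t (t - h) / F t (t - h)) ρ ∧
    UnifDiagLimit (fun h t => h * p10 F (t + h) t / F (t + h) t) (-ρ) ∧
    UnifDiagLimit (fun h t => h ^ 2 * p11 F t (t - h) / F t (t - h)) (ρ * (ρ - 1)) ∧
    UnifDiagLimit (fun h t => h ^ 2 * p02 F t (t - h) / F t (t - h)) (-(ρ * (ρ - 1))) := by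
  refine ⟨?_, ?_, ?_, ?_⟩
  · intro K _ ε hε
    obtain ⟨δ, hδ, hd⟩ := PLK.phi_eps ρ η ε hε
    refine ⟨min δ 1, lt_min hδ one_pos, fun h h0 hlt t _ => ?_⟩
    have hme : h < δ := lt_of_lt_of_le hlt (min_le_left _ _)
    have hh1 : h ∈ Set.Ioo (0:ℝ) 1 := ⟨h0, lt_of_lt_of_le hlt (min_le_right _ _)⟩
    have hsub : t - (t - h) = h := by ring
    have hmem : t - (t - h) ∈ Set.Ioo (0:ℝ) 1 := by rw [hsub]; exact hh1
    have hp := PLK.p01_eq ρ η F hF hmem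
    have hFv : F t (t - h) = PLK.g0 ρ η h := by
      rw [PLK.F_eq ρ η F hF, hsub, PLK.G_eq_g0 ρ η hh1]
    simp only []
    rw [hp, hsub, hFv]
    have hr := PLK.ratio1 ρ η hh1
    rw [show h * -PLK.g1 ρ η h / PLK.g0 ρ η h + ρ
        = -((h * PLK.g1 ρ η h / PLK.g0 ρ η h) - ρ) by ring, hr, abs_neg]
    exact hd h h0 hme
  · intro K _ ε hε
    obtain ⟨δ, hδ, hd⟩ := PLK.phi_eps ρ η ε hε
    refine ⟨min δ 1, lt_min hδ one_pos, fun h h0 hlt t _ => ?_⟩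
    have hme : h < δ := lt_of_lt_of_le hlt (min_le_left _ _)
    have hh1 : h ∈ Set.Ioo (0:ℝ) 1 := ⟨h0, lt_of_lt_of_le hlt (min_le_right _ _)⟩
    have hsub : t + h - t = h := by ring
    have hmem : t + h - t ∈ Set.Ioo (0:ℝ) 1 := by rw [hsub]; exact hh1
    have hp := PLK.p10_eq ρ η F hF hmem
    have hFv : F (t + h) t = PLK.g0 ρ η h := by
      rw [PLK.F_eq ρ η F hF, hsub, PLK.G_eq_g0 ρ η hh1]
    simp only []
    rw [hp, hsub, hFv]
    have hr := PLK.ratio1 ρ η hh1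
    rw [show h * PLK.g1 ρ η h / PLK.g0 ρ η h + -ρ
        = (h * PLK.g1 ρ η h / PLK.g0 ρ η h) - ρ by ring, hr]
    exact hd h h0 hme
  · intro K _ ε hε
    obtain ⟨δ, hδ, hd⟩ := PLK.psi_eps ρ η ε hε
    refine ⟨min δ 1, lt_min hδ one_pos, fun h h0 hlt t _ => ?_⟩
    have hme : h < δ := lt_of_lt_of_le hlt (min_le_left _ _)
    have hh1 : h ∈ Set.Ioo (0:ℝ) 1 := ⟨h0, lt_of_lt_of_le hlt (min_le_right _ _)⟩
    have hsub : t - (t - h) = h := by ring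
    have hmem : t - (t - h) ∈ Set.Ioo (0:ℝ) 1 := by rw [hsub]; exact hh1
    have hp := PLK.p11_eq ρ η F hF hmem
    have hFv : F t (t - h) = PLK.g0 ρ η h := by
      rw [PLK.F_eq ρ η F hF, hsub, PLK.G_eq_g0 ρ η hh1]
    simp only []
    rw [hp, hsub, hFv]
    have hr := PLK.ratio2 ρ η hh1
    rw [show h ^ 2 * -PLK.g2 ρ η h / PLK.g0 ρ η h + ρ * (ρ - 1)
        = -((h ^ 2 * PLK.g2 ρ η h / PLK.g0 ρ η h) - ρ * (ρ - 1)) by ring, hr, abs_neg]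
    exact hd h h0 hme
  · intro K _ ε hε
    obtain ⟨δ, hδ, hd⟩ := PLK.psi_eps ρ η ε hε
    refine ⟨min δ 1, lt_min hδ one_pos, fun h h0 hlt t _ => ?_⟩
    have hme : h < δ := lt_of_lt_of_le hlt (min_le_left _ _)
    have hh1 : h ∈ Set.Ioo (0:ℝ) 1 := ⟨h0, lt_of_lt_of_le hlt (min_le_right _ _)⟩
    have hsub : t - (t - h) = h := by ring
    have hmem : t - (t - h) ∈ Set.Ioo (0:ℝ) 1 := by rw [hsub]; exact hh1
    have hp := PLK.p02_eq ρ η F hF hmem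
    have hFv : F t (t - h) = PLK.g0 ρ η h := by
      rw [PLK.F_eq ρ η F hF, hsub, PLK.G_eq_g0 ρ η hh1]
    simp only []
    rw [hp, hsub, hFv]
    have hr := PLK.ratio2 ρ η hh1
    rw [show h ^ 2 * PLK.g2 ρ η h / PLK.g0 ρ η h + -(ρ * (ρ - 1))
        = (h ^ 2 * PLK.g2 ρ η h / PLK.g0 ρ η h) - ρ * (ρ - 1) by ring, hr]
    exact hd h h0 hme
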